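/- Let S be a finite type and R a finite set of reactions with reactant complexes y(r) and product complexes y'(r) in ℝ≥0^S, with stoichiometric subspace 𝒮 of dimension d. If there exist d reactions r₁,…,r_d and vectors p₁,…,p_d ∈ ℝ≥0^S with supp(p_i) = supp(y(r_i)) such that det[p_i · (y'(r_j) − y(r_j))]_{i,j} ≠ 0, then the network is weakly normal: there exists a choice of p_r ∈ ℝ≥0^S with supp(p_r) = supp(y(r)) for all r ∈ R such that σ ↦ ∑_{r ∈ R} (p_r · σ)(y'(r) − y(r)) is nonsingular on 𝒮. -/

import Mathlib

/-- The linear map associated to a choice of coefficient functions `q`. -/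
noncomputable def crnFmap {S R : Type} [Fintype S] [Fintype R]
    (y y' : R → S → ℝ) (q : R → S → ℝ) : (S → ℝ) →ₗ[ℝ] (S → ℝ) where
  toFun σ := ∑ r', (∑ s, q r' s * σ s) • (y' r' - y r')
  map_add' σ τ := by
    simp [Pi.add_apply, mul_add, Finset.sum_add_distrib, add_smul]
  map_smul' c σ := by
    simp [Finset.smul_sum, Finset.mul_sum, mul_left_comm, smul_smul, mul_comm]

/-- Proposition 8.5: the determinant test implies weak normality. -/
theorem det_test_implies_weakly_normal
    {S R : Type} [Fintype S] [Fintype R]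
    (y y' : R → S → ℝ)
    (hy : ∀ r s, 0 ≤ y r s) (hy' : ∀ r s, 0 ≤ y' r s)
    (𝒮 : Submodule ℝ (S → ℝ))
    (h𝒮 : 𝒮 = Submodule.span ℝ (Set.range fun r => y' r - y r))
    (d : ℕ) (hd : Module.finrank ℝ 𝒮 = d)
    (r : Fin d → R) (p : Fin d → S → ℝ)
    (hp : ∀ i s, 0 ≤ p i s)
    (hsupp : ∀ i s, p i s ≠ 0 ↔ y (r i) s ≠ 0)
    (hdet : (Matrix.of fun i j : Fin d =>
      ∑ s, p i s * (y' (r j) s - y (r j) s)).det ≠ 0) :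
    ∃ q : R → S → ℝ,
      (∀ r' s, 0 ≤ q r' s) ∧
      (∀ r' s, q r' s ≠ 0 ↔ y r' s ≠ 0) ∧
      (∀ σ ∈ 𝒮, ∑ r', (∑ s, q r' s * σ s) • (y' r' - y r') = 0 → σ = 0) := by
  classical
  -- degenerate case d = 0
  rcases Nat.eq_zero_or_pos d with hd0 | hdpos
  · refine ⟨y, hy, fun r' s => Iff.rfl, fun σ hσ _ => ?_⟩
    have : 𝒮 = ⊥ := Submodule.finrank_eq_zero.mp (hd ▸ hd0 ▸ rfl)
    simpa [this] using hσ
  have : Nonempty (Fin d) := ⟨⟨0, hdpos⟩⟩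
  -- the stoichiometric vectors
  set v : Fin d → (S → ℝ) := fun j => y' (r j) - y (r j) with hv
  have hvmem : ∀ r', y' r' - y r' ∈ 𝒮 := fun r' => by
    rw [h𝒮]; exact Submodule.subset_span ⟨r', rfl⟩
  set w : Fin d → 𝒮 := fun j => ⟨v j, hvmem (r j)⟩ with hw
  set M : Matrix (Fin d) (Fin d) ℝ :=
    Matrix.of (fun i j : Fin d => ∑ s, p i s * (y' (r j) s - y (r j) s)) with hM
  -- linear independence of w
  have hli : LinearIndependent ℝ w := by
    rw [Fintype.linearIndependent_iff]
    intro c hc j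
    have hc' : ∑ i, c i • v i = 0 := by
      have := congrArg (Subtype.val) hc
      simpa using this
    have hmul : M.mulVec c = 0 := by
      funext i
      have key : ∑ s, p i s * (∑ k, c k • v k) s = 0 := by rw [hc']; simp
      have h2 : ∑ s, p i s * (∑ k, c k • v k) s = ∑ k, M i k * c k := by
        simp only [Finset.sum_apply, Pi.smul_apply, smul_eq_mul, Finset.mul_sum,
          hM, Matrix.of_apply]
        rw [Finset.sum_comm]
        refine Finset.sum_congr rfl fun k _ => ?_
        rw [Finset.sum_mul]
        refine Finset.sum_congr rfl fun s _ => ?_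
        simp only [hv, Pi.sub_apply]
        ring
      show M.mulVec c i = 0
      simpa [Matrix.mulVec, dotProduct] using h2.symm.trans key
    exact congrFun (Matrix.eq_zero_of_mulVec_eq_zero hdet hmul) j
  -- basis of 𝒮
  have hcard : Fintype.card (Fin d) = Module.finrank ℝ 𝒮 := by simp [hd]
  set b : Module.Basis (Fin d) ℝ 𝒮 := basisOfLinearIndependentOfCardEqFinrank hli hcard with hb
  have hbw : ⇑b = w := coe_basisOfLinearIndependentOfCardEqFinrank hli hcard
  -- the distinguished coefficient functions, collapsed over repeated reactions
  set P : R → S → ℝ := fun r' s => ∑ i, if r i = r' then p i s else 0 with hP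
  -- restriction of crnFmap to 𝒮
  have hmemF : ∀ q : R → S → ℝ, ∀ x ∈ 𝒮, crnFmap y y' q x ∈ 𝒮 := by
    intro q x _
    exact Submodule.sum_mem _ fun r' _ => Submodule.smul_mem _ _ (hvmem r')
  set T : (R → S → ℝ) → (𝒮 →ₗ[ℝ] 𝒮) := fun q => (crnFmap y y' q).restrict (hmemF q) with hT
  -- `T P` in the basis `b` is the matrix `M`
  have hTP : LinearMap.toMatrix b b (T P) = M := by
    have heq : T P = Matrix.toLin b b M := by
      apply b.ext
      intro j
      rw [Matrix.toLin_self]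
      apply Subtype.ext
      have hbj : b j = w j := by rw [hbw]
      rw [hbj]
      have hrhs : ((∑ i, M i j • b i : 𝒮) : S → ℝ) = ∑ i, M i j • v i := by
        push_cast [hbw]
        rfl
      rw [hrhs]
      show crnFmap y y' P (v j) = ∑ i, M i j • v i
      show ∑ r', (∑ s, P r' s * v j s) • (y' r' - y r') = ∑ i, M i j • v i
      have expand : ∀ r', (∑ s, P r' s * v j s : ℝ)
          = ∑ i, if r i = r' then ∑ s, p i s * v j s else 0 := by
        intro r'
        simp only [hP, Finset.sum_mul, ite_mul, zero_mul]
        rw [Finset.sum_comm]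
        refine Finset.sum_congr rfl fun i _ => ?_
        by_cases h : r i = r' <;> simp [h]
      calc ∑ r', (∑ s, P r' s * v j s) • (y' r' - y r')
          = ∑ r', ∑ i, (if r i = r' then ∑ s, p i s * v j s else 0) • (y' r' - y r') := by
            refine Finset.sum_congr rfl fun r' _ => ?_
            rw [expand, Finset.sum_smul]
        _ = ∑ i, ∑ r', (if r i = r' then (∑ s, p i s * v j s) • (y' r' - y r') else 0) := by
            rw [Finset.sum_comm]
            refine Finset.sum_congr rfl fun i _ => Finset.sum_congr rfl fun r' _ => ?_
            by_cases h : r i = r' <;> simp [h]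
        _ = ∑ i, (∑ s, p i s * v j s) • (y' (r i) - y (r i)) := by
            refine Finset.sum_congr rfl fun i _ => ?_
            rw [Finset.sum_ite_eq]
            simp only [Finset.mem_univ, if_true, Pi.sub_apply]
        _ = ∑ i, M i j • v i := by
            refine Finset.sum_congr rfl fun i _ => ?_
            simp only [hM, Matrix.of_apply, hv, Pi.sub_apply]
    rw [heq, LinearMap.toMatrix_toLin]
  -- affine dependence on ε
  set N : Matrix (Fin d) (Fin d) ℝ := LinearMap.toMatrix b b (T y) with hN
  have hTe : ∀ ε : ℝ, LinearMap.toMatrix b b (T fun r' => P r' + ε • y r') = M + ε • N := by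
    intro ε
    have : (T fun r' => P r' + ε • y r') = T P + ε • T y := by
      apply LinearMap.ext
      intro x
      apply Subtype.ext
      show crnFmap y y' (fun r' => P r' + ε • y r') x
        = crnFmap y y' P x + ε • crnFmap y y' y x
      show ∑ r', (∑ s, (P r' s + ε * y r' s) * (x : S → ℝ) s) • (y' r' - y r')
        = (∑ r', (∑ s, P r' s * (x : S → ℝ) s) • (y' r' - y r'))
          + ε • ∑ r', (∑ s, y r' s * (x : S → ℝ) s) • (y' r' - y r')
      rw [Finset.smul_sum, ← Finset.sum_add_distrib]
      refine Finset.sum_congr rfl fun r' _ => ?_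
      rw [smul_smul, ← add_smul]
      congr 1
      rw [Finset.mul_sum, ← Finset.sum_add_distrib]
      refine Finset.sum_congr rfl fun s _ => by ring
    rw [this, map_add, map_smul, hTP, hN]
  -- choose ε > 0 keeping the determinant nonzero
  have hcont : Continuous fun ε : ℝ => (M + ε • N).det := by
    exact (continuous_const.add (continuous_id.smul continuous_const)).matrix_det
  have h0 : (M + (0 : ℝ) • N).det ≠ 0 := by simpa using hdet
  have hev : ∀ᶠ ε : ℝ in nhds 0, (M + ε • N).det ≠ 0 :=
    (hcont.continuousAt).eventually_ne h0
  rw [Metric.eventually_nhds_iff] at hev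
  obtain ⟨δ, hδ, hball⟩ := hev
  set ε : ℝ := δ / 2 with hε
  have hεpos : 0 < ε := by positivity
  have hdet2 : (M + ε • N).det ≠ 0 := by
    apply hball
    simp only [dist_zero_right, Real.norm_eq_abs, hε]
    rw [abs_of_pos (by positivity)]
    linarith
  -- the final coefficient functions
  refine ⟨fun r' => P r' + ε • y r', ?_, ?_, ?_⟩
  · intro r' s
    have h1 : 0 ≤ P r' s := Finset.sum_nonneg fun i _ => by
      by_cases h : r i = r' <;> simp [h, hp]
    have h2 : 0 ≤ ε * y r' s := mul_nonneg hεpos.le (hy r' s)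
    simpa using add_nonneg h1 h2
  · intro r' s
    constructor
    · intro hne
      by_contra hy0
      apply hne
      have hP0 : P r' s = 0 := by
        apply Finset.sum_eq_zero
        intro i _
        by_cases h : r i = r'
        · simp only [h, if_true]
          by_contra hpi
          exact (hsupp i s).mp hpi (by rw [h, hy0])
        · simp [h]
      show P r' s + ε * y r' s = 0
      rw [hP0, hy0]; ring
    · intro hne
      have hypos : 0 < y r' s := lt_of_le_of_ne (hy r' s) (Ne.symm hne)
      have h1 : 0 ≤ P r' s := Finset.sum_nonneg fun i _ => by
        by_cases h : r i = r' <;> simp [h, hp]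
      have : 0 < P r' s + ε * y r' s := by nlinarith
      show P r' s + ε * y r' s ≠ 0
      linarith
  · intro σ hσ hsum
    -- the restricted endomorphism is injective
    have hdetT : LinearMap.det (T fun r' => P r' + ε • y r') ≠ 0 := by
      rw [← LinearMap.det_toMatrix b, hTe ε]
      exact hdet2
    set f := T fun r' => P r' + ε • y r'
    have hunit : IsUnit (LinearMap.toMatrix b b f).det := by
      rw [LinearMap.det_toMatrix]; exact isUnit_iff_ne_zero.2 hdetT
    have hco : ((LinearEquiv.ofIsUnitDet hunit : 𝒮 ≃ₗ[ℝ] 𝒮) : 𝒮 →ₗ[ℝ] 𝒮) = f :=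
      LinearEquiv.coe_ofIsUnitDet hunit
    have hce : ∀ x, LinearEquiv.ofIsUnitDet hunit x = f x := fun x =>
      LinearMap.congr_fun hco x
    have hinj : Function.Injective f := fun a a' h =>
      (LinearEquiv.ofIsUnitDet hunit).injective (by rw [hce, hce, h])
    have hfx : f ⟨σ, hσ⟩ = 0 := by
      apply Subtype.ext
      show crnFmap y y' (fun r' => P r' + ε • y r') σ = 0
      exact hsum
    have : (⟨σ, hσ⟩ : 𝒮) = 0 := hinj (by rw [hfx, map_zero])
    simpa using congrArg Subtype.val this
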